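/- Let n ≥ 3 be an integer, let u > 0 and let v_1,…,v_n be real numbers. Let D be the (n+1)×(n+1) real matrix with rows and columns indexed by 0,1,…,n defined by: D(0,0) = 0; D(0,j) = D(j,0) = v_j for 1 ≤ j ≤ n; and for 1 ≤ i, j ≤ n, D(i,j) = 0 if i = j and D(i,j) = u if i ≠ j. Then det D = (−u)^(n−1) · [ (n−1)(v_1² + ⋯ + v_n²) − (v_1 + ⋯ + v_n)² ]. -/

import Mathlib

set_option maxRecDepth 20000

/-- The inner Cayley–Menger determinant of the `n`-pre-kite `PK[n; u; v₁,…,vₙ]`.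
The matrix `D` is indexed by `Fin (n+1)`, where index `0` is the apex vertex
and index `j.succ` (for `j : Fin n`) is the vertex index `j+1`. -/
theorem stmt_2 (n : ℕ) (hn : 3 ≤ n) (u : ℝ) (hu : 0 < u) (v : Fin n → ℝ)
    (D : Matrix (Fin (n + 1)) (Fin (n + 1)) ℝ)
    (hD00 : D 0 0 = 0)
    (hDv : ∀ j : Fin n, D 0 j.succ = v j ∧ D j.succ 0 = v j)
    (hDin : ∀ i j : Fin n, D i.succ j.succ = if i = j then 0 else u) :
    D.det = (-u) ^ (n - 1) *
      (((n : ℝ) - 1) * (∑ j, v j ^ 2) - (∑ j, v j) ^ 2) := by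
  have hu' : u ≠ 0 := ne_of_gt hu
  have hn3 : (3:ℝ) ≤ (n:ℝ) := by exact_mod_cast hn
  have hn1 : (n : ℝ) - 1 ≠ 0 := by linarith
  set c : ℝ := 1 / ((n:ℝ) - 1) with hc
  set Dm : Matrix (Fin n) (Fin n) ℝ := Matrix.of fun i j => if i = j then 0 else u with hDm
  set E : Matrix (Fin n) (Fin n) ℝ :=
    Matrix.of fun i j => (1/u) * (c - if i = j then 1 else 0) with hE
  have key : ∀ i j : Fin n, (∑ k, ((1/u) * (c - if i = k then 1 else 0)) *
      (if k = j then 0 else u)) = if i = j then 1 else 0 := by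
    intro i j
    have : ∀ k : Fin n, ((1/u) * (c - if i = k then 1 else 0)) * (if k = j then 0 else u)
        = (c - if i = k then 1 else 0) - (c - if i = k then 1 else 0) * (if k = j then 1 else 0) := by
      intro k
      by_cases h1 : i = k <;> by_cases h2 : k = j <;> simp [h1, h2] <;> field_simp
    rw [Finset.sum_congr rfl fun k _ => this k]
    simp only [sub_mul, Finset.sum_sub_distrib, mul_ite, ite_mul, mul_one, mul_zero,
      one_mul, zero_mul, Finset.sum_const, Finset.sum_ite_eq, Finset.sum_ite_eq',
      Finset.card_univ, Fintype.card_fin, Finset.mem_univ, if_true, nsmul_eq_mul]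
    by_cases h : i = j <;> simp only [h, if_true, if_false] <;> rw [hc] <;> field_simp <;> ring
  have hED : E * Dm = 1 := by
    ext i j
    simp only [Matrix.mul_apply, hE, hDm, Matrix.of_apply, Matrix.one_apply]
    exact key i j
  have hDmT : Dm.transpose = Dm := by
    ext i j
    simp only [Matrix.transpose_apply, hDm, Matrix.of_apply]
    exact if_congr eq_comm rfl rfl
  have hET : E.transpose = E := by
    ext i j
    simp only [Matrix.transpose_apply, hE, Matrix.of_apply]
    rw [show (if j = i then (1:ℝ) else 0) = (if i = j then 1 else 0) from if_congr eq_comm rfl rfl]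
  have hDE : Dm * E = 1 := by
    have := congrArg Matrix.transpose hED
    rwa [Matrix.transpose_mul, hDmT, hET, Matrix.transpose_one] at this
  letI : Invertible Dm := ⟨E, hED, hDE⟩
  -- reindex D as a block matrix
  let e : Fin 1 ⊕ Fin n ≃ Fin (n+1) := finSumFinEquiv.trans (finCongr (Nat.add_comm 1 n))
  have he0 : ∀ i : Fin 1, e (Sum.inl i) = 0 := by
    intro i
    apply Fin.ext
    simp [e, Fin.ext_iff, Fin.val_eq_zero]
  have heS : ∀ j : Fin n, e (Sum.inr j) = j.succ := by
    intro j
    apply Fin.ext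
    simp [e, finSumFinEquiv, Fin.natAdd]
    omega
  have hsub : D.submatrix e e = Matrix.fromBlocks (0 : Matrix (Fin 1) (Fin 1) ℝ)
      (Matrix.of fun _ j => v j) (Matrix.of fun i _ => v i) Dm := by
    ext i j
    cases i with
    | inl i =>
      cases j with
      | inl j => simp [Matrix.submatrix_apply, he0, hD00]
      | inr j => simp [Matrix.submatrix_apply, he0, heS, (hDv j).1]
    | inr i =>
      cases j with
      | inl j => simp [Matrix.submatrix_apply, he0, heS, (hDv i).2]
      | inr j => simp [Matrix.submatrix_apply, heS, hDin i j, hDm]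
  have hdet : D.det = Dm.det * ((0 : Matrix (Fin 1) (Fin 1) ℝ) -
      (Matrix.of fun _ j => v j) * ⅟Dm * (Matrix.of fun i _ => v i)).det := by
    rw [← Matrix.det_submatrix_equiv_self e D, hsub, Matrix.det_fromBlocks₂₂]
  have hinv : (⅟Dm : Matrix (Fin n) (Fin n) ℝ) = E := rfl
  -- determinant of Dm
  have hDmdet : Dm.det = u ^ n * ((-1 : ℝ) ^ n * (1 - (n : ℝ))) := by
    have h1 : Dm = (-u) • (1 + Matrix.replicateCol (Fin 1) (fun _ : Fin n => (-1:ℝ)) * Matrix.replicateRow (Fin 1) (fun _ : Fin n => (1:ℝ))) := by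
      ext i j
      simp only [hDm, Matrix.of_apply, Matrix.smul_apply, Matrix.add_apply,
        Matrix.mul_apply, Matrix.replicateCol_apply, Matrix.replicateRow_apply, Matrix.one_apply,
        Finset.sum_const, Finset.card_univ, Fintype.card_fin, smul_eq_mul]
      by_cases h : i = j <;> simp [h]
    rw [h1, Matrix.det_smul]
    erw [Matrix.det_one_add_replicateCol_mul_replicateRow]
    simp only [dotProduct, one_mul, Finset.sum_const, Finset.card_univ,
      Fintype.card_fin, nsmul_eq_mul, smul_eq_mul, mul_neg_one]
    rw [neg_pow]
    ring
  -- the Schur complement entry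
  have hschur : ((0 : Matrix (Fin 1) (Fin 1) ℝ) -
      (Matrix.of fun _ j => v j) * E * (Matrix.of fun i _ => v i)).det
      = -((1/u) * (c * (∑ j, v j)^2 - ∑ j, v j ^ 2)) := by
    rw [Matrix.det_fin_one]
    simp only [Matrix.sub_apply, Matrix.zero_apply, Matrix.mul_apply, Matrix.of_apply, hE]
    rw [zero_sub]
    congr 1
    have inner : ∀ k : Fin n, (∑ l, (v k * ((1/u) * (c - if k = l then 1 else 0))) * v l)
        = (1/u) * (v k * (c * (∑ l, v l) - v k)) := by
      intro k
      have : ∀ l : Fin n, (v k * ((1/u) * (c - if k = l then 1 else 0))) * v l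
          = (1/u) * (v k * (c * v l)) - (1/u) * (v k * ((if k = l then 1 else 0) * v l)) := by
        intro l; ring
      rw [Finset.sum_congr rfl fun l _ => this l, Finset.sum_sub_distrib]
      simp only [← Finset.mul_sum, ite_mul, one_mul, zero_mul, Finset.sum_ite_eq,
        Finset.mem_univ, if_true]
      ring
    calc (∑ l, (∑ k, v k * ((1/u) * (c - if k = l then 1 else 0))) * v l)
        = ∑ k, ∑ l, (v k * ((1/u) * (c - if k = l then 1 else 0))) * v l := by
          rw [Finset.sum_comm]
          exact Finset.sum_congr rfl fun l _ => by rw [Finset.sum_mul]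
      _ = ∑ k, (1/u) * (v k * (c * (∑ l, v l) - v k)) :=
          Finset.sum_congr rfl fun k _ => inner k
      _ = (1/u) * (c * (∑ j, v j)^2 - ∑ j, v j ^ 2) := by
          simp only [← Finset.mul_sum]
          congr 1
          have h2 : ∀ i : Fin n, v i * (c * (∑ l, v l) - v i)
              = (c * (∑ l, v l)) * v i - v i ^ 2 := fun i => by ring
          rw [Finset.sum_congr rfl fun i _ => h2 i, Finset.sum_sub_distrib, ← Finset.mul_sum]
          ring
  rw [hinv] at hdet
  rw [hdet, hschur, hDmdet, hc]
  have hun : u ^ n = u ^ (n-1) * u := by rw [← pow_succ]; congr 1; omega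
  have hsn : (-1:ℝ) ^ n = (-1:ℝ) ^ (n-1) * (-1) := by rw [← pow_succ]; congr 1; omega
  rw [hun, hsn, neg_pow]
  field_simp
  ring
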